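/- (Proposition 1, converse direction, detectability part) Let G : 𝕏×𝕏×ℙ×ℙ → ℝ_{≥0} be a joint i-IOSS Lyapunov function, i.e., there exist symmetric positive definite matrices G_lo, G_hi, Q, R and η ∈ [0,1) such that ‖(x−x̃, p−p̃)‖²_{G_lo} ≤ G(x,x̃,p,p̃) ≤ ‖(x−x̃, p−p̃)‖²_{G_hi} and G(f(x,u,w,p), f(x̃,u,w̃,p̃), p, p̃) ≤ η G(x,x̃,p,p̃) + ‖w−w̃‖²_Q + ‖h(x,u,w,p)−h(x̃,u,w̃,p̃)‖²_R for all (x,u,w,p),(x̃,u,w̃,p̃) ∈ ℤ. Then for every pair of system trajectories in ℤ with common inputs and outputs y_s, ỹ_s, and all t ∈ ℕ: λ_min(G_lo)‖x_t−x̃_t‖² ≤ λ_max(G_hi)η^t‖x_0−x̃_0‖² + Σ_{j=1}^{t} η^{j−1}(λ_max(G_hi)‖p−p̃‖² + ‖w_{t−j}−w̃_{t−j}‖²_Q + ‖y_{t−j}−ỹ_{t−j}‖²_R); that is, the system is exponentially i-IOSS in the state when p is regarded as an additional constant input. -/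

import Mathlib

open Matrix Finset

/-- Weighted squared norm `‖v‖_Q² = vᵀ Q v`. -/
noncomputable def quad {ι : Type*} [Fintype ι] (Q : Matrix ι ι ℝ) (v : ι → ℝ) : ℝ :=
  v ⬝ᵥ Q.mulVec v

/-- Membership in the constraint set `ℤ = {(x,u,w,p) ∈ 𝕏×𝕌×𝕎×ℙ : f(x,u,w,p) ∈ 𝕏}`. -/
def ZmemS {n m q o : ℕ}
    (f : (Fin n → ℝ) → (Fin m → ℝ) → (Fin q → ℝ) → (Fin o → ℝ) → (Fin n → ℝ))
    (Xs : Set (Fin n → ℝ)) (Us : Set (Fin m → ℝ)) (Ws : Set (Fin q → ℝ))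
    (Ps : Set (Fin o → ℝ))
    (xx : Fin n → ℝ) (uu : Fin m → ℝ) (ww : Fin q → ℝ) (pp : Fin o → ℝ) : Prop :=
  xx ∈ Xs ∧ uu ∈ Us ∧ ww ∈ Ws ∧ pp ∈ Ps ∧ f xx uu ww pp ∈ Xs

lemma quad_nonneg' {ι : Type*} [Fintype ι] {M : Matrix ι ι ℝ} (hM : M.PosDef) (v : ι → ℝ) :
    0 ≤ quad M v := by
  have := hM.posSemidef.re_dotProduct_nonneg v
  simpa [quad] using this

lemma dot_elim' {ι κ : Type*} [Fintype ι] [Fintype κ] (a c : ι → ℝ) (b d : κ → ℝ) :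
    (Sum.elim a b) ⬝ᵥ (Sum.elim c d) = a ⬝ᵥ c + b ⬝ᵥ d := by
  simp [dotProduct, Fintype.sum_sum_type]

lemma dot_self_nonneg' {ι : Type*} [Fintype ι] (v : ι → ℝ) : 0 ≤ v ⬝ᵥ v :=
  Finset.sum_nonneg fun _ _ => mul_self_nonneg _

/-- **Proposition 1, converse direction, detectability part.**
A joint i-IOSS Lyapunov function `G` for the augmented state `(x,p)` yields an
exponential i-IOSS bound for the state when `p` is regarded as a constant input:
`λ_min(G_lo)‖x_t−x̃_t‖² ≤ λ_max(G_hi)η^t‖x_0−x̃_0‖²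
 + Σ_{j=1}^{t} η^{j−1}(λ_max(G_hi)‖p−p̃‖² + ‖w_{t−j}−w̃_{t−j}‖²_Q + ‖y_{t−j}−ỹ_{t−j}‖²_R)`. -/
theorem joint_iIOSS_implies_state_detectability
    {n m q o r : ℕ}
    (f : (Fin n → ℝ) → (Fin m → ℝ) → (Fin q → ℝ) → (Fin o → ℝ) → (Fin n → ℝ))
    (h : (Fin n → ℝ) → (Fin m → ℝ) → (Fin q → ℝ) → (Fin o → ℝ) → (Fin r → ℝ))
    (Xs : Set (Fin n → ℝ)) (Us : Set (Fin m → ℝ)) (Ws : Set (Fin q → ℝ))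
    (Ps : Set (Fin o → ℝ))
    (Glo Ghi : Matrix (Fin n ⊕ Fin o) (Fin n ⊕ Fin o) ℝ)
    (Q : Matrix (Fin q) (Fin q) ℝ) (R : Matrix (Fin r) (Fin r) ℝ)
    (hGlo : Glo.PosDef) (hGhi : Ghi.PosDef) (hQ : Q.PosDef) (hR : R.PosDef)
    (η : ℝ) (hη0 : 0 ≤ η) (hη1 : η < 1)
    (G : (Fin n → ℝ) → (Fin n → ℝ) → (Fin o → ℝ) → (Fin o → ℝ) → ℝ)
    (hGnn : ∀ a b pp ppt, a ∈ Xs → b ∈ Xs → pp ∈ Ps → ppt ∈ Ps → 0 ≤ G a b pp ppt)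
    (hGbnd : ∀ a b pp ppt, a ∈ Xs → b ∈ Xs → pp ∈ Ps → ppt ∈ Ps →
      quad Glo (Sum.elim (a - b) (pp - ppt)) ≤ G a b pp ppt
        ∧ G a b pp ppt ≤ quad Ghi (Sum.elim (a - b) (pp - ppt)))
    (hGdiss : ∀ xx uu ww pp xxt wwt ppt,
      ZmemS f Xs Us Ws Ps xx uu ww pp → ZmemS f Xs Us Ws Ps xxt uu wwt ppt →
      G (f xx uu ww pp) (f xxt uu wwt ppt) pp ppt
        ≤ η * G xx xxt pp ppt + quad Q (ww - wwt)
          + quad R (h xx uu ww pp - h xxt uu wwt ppt))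
    (lminGlo lmaxGhi : ℝ)
    (hlmin : IsGreatest {l : ℝ | ∀ v : Fin n ⊕ Fin o → ℝ, l * (v ⬝ᵥ v) ≤ quad Glo v}
        lminGlo)
    (hlmax : IsLeast {l : ℝ | ∀ v : Fin n ⊕ Fin o → ℝ, quad Ghi v ≤ l * (v ⬝ᵥ v)}
        lmaxGhi)
    -- the two trajectories with common inputs
    (x xt : ℕ → Fin n → ℝ) (u : ℕ → Fin m → ℝ) (w wt : ℕ → Fin q → ℝ)
    (p pt : Fin o → ℝ) (y yt : ℕ → Fin r → ℝ) (t : ℕ)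
    (hx0 : x 0 ∈ Xs) (hxt0 : xt 0 ∈ Xs) (hp : p ∈ Ps) (hpt : pt ∈ Ps)
    (hZ : ∀ s < t, ZmemS f Xs Us Ws Ps (x s) (u s) (w s) p)
    (hZt : ∀ s < t, ZmemS f Xs Us Ws Ps (xt s) (u s) (wt s) pt)
    (hdyn : ∀ s < t, x (s + 1) = f (x s) (u s) (w s) p)
    (hdynt : ∀ s < t, xt (s + 1) = f (xt s) (u s) (wt s) pt)
    (hy : ∀ s < t, y s = h (x s) (u s) (w s) p)
    (hyt : ∀ s < t, yt s = h (xt s) (u s) (wt s) pt) :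
    lminGlo * ((x t - xt t) ⬝ᵥ (x t - xt t))
      ≤ lmaxGhi * η ^ t * ((x 0 - xt 0) ⬝ᵥ (x 0 - xt 0))
        + ∑ j ∈ Finset.range t, η ^ j *
            (lmaxGhi * ((p - pt) ⬝ᵥ (p - pt))
              + quad Q (w (t - 1 - j) - wt (t - 1 - j))
              + quad R (y (t - 1 - j) - yt (t - 1 - j))) := by
  classical
  set c : ℕ → ℝ := fun s => quad Q (w s - wt s) + quad R (y s - yt s) with hc
  have hlmin0 : 0 ≤ lminGlo := hlmin.2 (fun v => by simpa using quad_nonneg' hGlo v)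
  have hA0 : 0 ≤ lmaxGhi * ((p - pt) ⬝ᵥ (p - pt)) := by
    have h1 := hlmax.1 (Sum.elim (0 : Fin n → ℝ) (p - pt))
    have h2 := quad_nonneg' hGhi (Sum.elim (0 : Fin n → ℝ) (p - pt))
    rw [dot_elim'] at h1
    simp only [dotProduct_zero, zero_add, zero_dotProduct] at h1
    linarith
  have hxmem : ∀ s, s ≤ t → x s ∈ Xs := by
    intro s hs
    cases s with
    | zero => exact hx0
    | succ k =>
      rw [hdyn k (Nat.lt_of_succ_le hs)]
      exact (hZ k (Nat.lt_of_succ_le hs)).2.2.2.2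
  have hxtmem : ∀ s, s ≤ t → xt s ∈ Xs := by
    intro s hs
    cases s with
    | zero => exact hxt0
    | succ k =>
      rw [hdynt k (Nat.lt_of_succ_le hs)]
      exact (hZt k (Nat.lt_of_succ_le hs)).2.2.2.2
  have key : ∀ k, k ≤ t → G (x k) (xt k) p pt
      ≤ η ^ k * G (x 0) (xt 0) p pt + ∑ j ∈ Finset.range k, η ^ j * c (k - 1 - j) := by
    intro k
    induction k with
    | zero => intro _; simp
    | succ k ih =>
      intro hk
      have hkt : k < t := Nat.lt_of_succ_le hk
      have ih' := ih (le_of_lt hkt)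
      have step : G (x (k+1)) (xt (k+1)) p pt ≤ η * G (x k) (xt k) p pt + c k := by
        rw [hdyn k hkt, hdynt k hkt]
        have hd := hGdiss (x k) (u k) (w k) p (xt k) (wt k) pt (hZ k hkt) (hZt k hkt)
        have hcy : c k = quad Q (w k - wt k)
            + quad R (h (x k) (u k) (w k) p - h (xt k) (u k) (wt k) pt) := by
          rw [hc]; simp only; rw [hy k hkt, hyt k hkt]
        rw [hcy]; linarith
      calc G (x (k+1)) (xt (k+1)) p pt ≤ η * G (x k) (xt k) p pt + c k := step
        _ ≤ η * (η ^ k * G (x 0) (xt 0) p pt + ∑ j ∈ Finset.range k, η ^ j * c (k - 1 - j))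
              + c k := by
            have := mul_le_mul_of_nonneg_left ih' hη0
            linarith
        _ = η ^ (k+1) * G (x 0) (xt 0) p pt
              + ∑ j ∈ Finset.range (k+1), η ^ j * c (k + 1 - 1 - j) := by
            rw [Finset.sum_range_succ']
            have hidx : ∀ j ∈ Finset.range k,
                η ^ (j+1) * c (k + 1 - 1 - (j+1)) = η * (η ^ j * c (k - 1 - j)) := by
              intro j _
              have : k + 1 - 1 - (j+1) = k - 1 - j := by omega
              rw [this, pow_succ]; ring
            rw [Finset.sum_congr rfl hidx]
            simp only [pow_zero, one_mul, Nat.add_sub_cancel, Nat.sub_zero]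
            rw [← Finset.mul_sum, pow_succ]
            ring
  rcases Nat.eq_zero_or_pos t with rfl | ht
  · -- t = 0
    have hb := hGbnd (x 0) (xt 0) p p hx0 hxt0 hp hp
    have hv : (Sum.elim (x 0 - xt 0) (p - p)) ⬝ᵥ (Sum.elim (x 0 - xt 0) (p - p))
        = (x 0 - xt 0) ⬝ᵥ (x 0 - xt 0) := by
      rw [dot_elim']; simp
    have h1 := hlmin.1 (Sum.elim (x 0 - xt 0) (p - p))
    have h2 := hlmax.1 (Sum.elim (x 0 - xt 0) (p - p))
    rw [hv] at h1 h2
    simp only [Finset.range_zero, Finset.sum_empty, add_zero, pow_zero, mul_one]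
    linarith [hb.1, hb.2]
  · -- t ≥ 1
    have hbt := hGbnd (x t) (xt t) p pt (hxmem t le_rfl) (hxtmem t le_rfl) hp hpt
    have hb0 := hGbnd (x 0) (xt 0) p pt hx0 hxt0 hp hpt
    have hvt : (Sum.elim (x t - xt t) (p - pt)) ⬝ᵥ (Sum.elim (x t - xt t) (p - pt))
        = (x t - xt t) ⬝ᵥ (x t - xt t) + (p - pt) ⬝ᵥ (p - pt) := dot_elim' _ _ _ _
    have hv0 : (Sum.elim (x 0 - xt 0) (p - pt)) ⬝ᵥ (Sum.elim (x 0 - xt 0) (p - pt))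
        = (x 0 - xt 0) ⬝ᵥ (x 0 - xt 0) + (p - pt) ⬝ᵥ (p - pt) := dot_elim' _ _ _ _
    have h1 : lminGlo * ((x t - xt t) ⬝ᵥ (x t - xt t) + (p - pt) ⬝ᵥ (p - pt))
        ≤ G (x t) (xt t) p pt := by
      have := hlmin.1 (Sum.elim (x t - xt t) (p - pt))
      rw [hvt] at this
      exact this.trans hbt.1
    have h2 := key t le_rfl
    have h3 : G (x 0) (xt 0) p pt
        ≤ lmaxGhi * ((x 0 - xt 0) ⬝ᵥ (x 0 - xt 0) + (p - pt) ⬝ᵥ (p - pt)) := by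
      have := hlmax.1 (Sum.elim (x 0 - xt 0) (p - pt))
      rw [hv0] at this
      exact hb0.2.trans this
    have h4 := mul_le_mul_of_nonneg_left h3 (pow_nonneg hη0 t)
    have h4' : η ^ t * (lmaxGhi * ((x 0 - xt 0) ⬝ᵥ (x 0 - xt 0) + (p - pt) ⬝ᵥ (p - pt)))
        = lmaxGhi * η ^ t * ((x 0 - xt 0) ⬝ᵥ (x 0 - xt 0))
          + η ^ t * (lmaxGhi * ((p - pt) ⬝ᵥ (p - pt))) := by ring
    have hgeom : η ^ t ≤ ∑ j ∈ Finset.range t, η ^ j := by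
      calc η ^ t ≤ η ^ (t-1) :=
            pow_le_pow_of_le_one hη0 (le_of_lt hη1) (by omega)
        _ ≤ ∑ j ∈ Finset.range t, η ^ j :=
            Finset.single_le_sum (f := fun j => η ^ j)
              (fun j _ => pow_nonneg hη0 j) (Finset.mem_range.mpr (by omega))
    have h5 : η ^ t * (lmaxGhi * ((p - pt) ⬝ᵥ (p - pt)))
        ≤ (∑ j ∈ Finset.range t, η ^ j) * (lmaxGhi * ((p - pt) ⬝ᵥ (p - pt))) :=
      mul_le_mul_of_nonneg_right hgeom hA0
    have hsum : ∑ j ∈ Finset.range t, η ^ j *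
          (lmaxGhi * ((p - pt) ⬝ᵥ (p - pt))
            + quad Q (w (t - 1 - j) - wt (t - 1 - j))
            + quad R (y (t - 1 - j) - yt (t - 1 - j)))
        = (∑ j ∈ Finset.range t, η ^ j) * (lmaxGhi * ((p - pt) ⬝ᵥ (p - pt)))
          + ∑ j ∈ Finset.range t, η ^ j * c (t - 1 - j) := by
      rw [Finset.sum_mul, ← Finset.sum_add_distrib]
      refine Finset.sum_congr rfl fun j _ => ?_
      rw [hc]; ring
    have h6 : 0 ≤ lminGlo * ((p - pt) ⬝ᵥ (p - pt)) :=
      mul_nonneg hlmin0 (dot_self_nonneg' _)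
    rw [hsum]
    nlinarith [h1, h2, h4, h4', h5, h6]
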